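/- Let A be a bounded linear operator on H. Then for every α ∈ [0,1], η(A)² ≤ (α/2)·ber(A²) + ‖ (1 − 3α/4)|A|² + (α/4)|A*|² + |A|⁴ ‖_ber. -/

import Mathlib

open scoped InnerProductSpace
open ContinuousLinearMap

variable {H : Type*} [NormedAddCommGroup H] [InnerProductSpace ℂ H] [CompleteSpace H]
variable {Ω : Type*} [Nonempty Ω]

/-- Berezin number: `ber(T) = sup_{λ∈Ω} |⟨T k̂_λ, k̂_λ⟩|`. -/
noncomputable def ber (k : Ω → H) (T : H →L[ℂ] H) : ℝ :=
  ⨆ lam : Ω, ‖⟪T (k lam), k lam⟫_ℂ‖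

/-- Berezin norm: `‖T‖_ber = sup_{λ,μ∈Ω} |⟨T k̂_λ, k̂_μ⟩|`. -/
noncomputable def bernorm (k : Ω → H) (T : H →L[ℂ] H) : ℝ :=
  ⨆ p : Ω × Ω, ‖⟪T (k p.1), k p.2⟫_ℂ‖

/-- Least Berezin number: `c(T) = inf_{λ∈Ω} |⟨T k̂_λ, k̂_λ⟩|`. -/
noncomputable def lber (k : Ω → H) (T : H →L[ℂ] H) : ℝ :=
  ⨅ lam : Ω, ‖⟪T (k lam), k lam⟫_ℂ‖

/-- Davis-Wielandt-Berezin radius: `η(T) = sup_{λ∈Ω} √(|⟨T k̂_λ, k̂_λ⟩|² + ‖T k̂_λ‖⁴)`. -/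
noncomputable def eta (k : Ω → H) (T : H →L[ℂ] H) : ℝ :=
  ⨆ lam : Ω, Real.sqrt (‖⟪T (k lam), k lam⟫_ℂ‖ ^ 2 + ‖T (k lam)‖ ^ 4)

/-- The modulus `|A| = (A*A)^{1/2}`. -/
noncomputable def absop (A : H →L[ℂ] H) : H →L[ℂ] H := CFC.sqrt (adjoint A * A)

/-- Buzano's inequality. -/
lemma buzano_aux (e u v : H) (he : ‖e‖ = 1) :
    ‖⟪u, e⟫_ℂ * ⟪e, v⟫_ℂ‖ ≤ (‖u‖ * ‖v‖ + ‖⟪u, v⟫_ℂ‖) / 2 := by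
  set w : H := (2 * ⟪e, u⟫_ℂ) • e - u with hw
  have hee : ⟪e, e⟫_ℂ = 1 := by
    rw [inner_self_eq_norm_sq_to_K, he]; norm_num
  have hww : ⟪w, w⟫_ℂ = ⟪u, u⟫_ℂ := by
    simp only [hw, inner_sub_sub_self, inner_smul_left, inner_smul_right, hee,
      map_mul, map_ofNat, inner_conj_symm, mul_one]
    ring
  have hnw : ‖w‖ = ‖u‖ := by
    rw [norm_eq_sqrt_re_inner (𝕜 := ℂ) w, norm_eq_sqrt_re_inner (𝕜 := ℂ) u, hww]
  have hwv : ⟪w, v⟫_ℂ = 2 * (⟪u, e⟫_ℂ * ⟪e, v⟫_ℂ) - ⟪u, v⟫_ℂ := by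
    simp only [hw, inner_sub_left, inner_smul_left, map_mul, map_ofNat, inner_conj_symm]
    ring
  have h1 : ‖⟪w, v⟫_ℂ‖ ≤ ‖u‖ * ‖v‖ := hnw ▸ norm_inner_le_norm w v
  have key : (2:ℂ) * (⟪u, e⟫_ℂ * ⟪e, v⟫_ℂ) = ⟪w, v⟫_ℂ + ⟪u, v⟫_ℂ := by rw [hwv]; ring
  have h2 : 2 * ‖⟪u, e⟫_ℂ * ⟪e, v⟫_ℂ‖ ≤ ‖u‖ * ‖v‖ + ‖⟪u, v⟫_ℂ‖ := by
    calc 2 * ‖⟪u, e⟫_ℂ * ⟪e, v⟫_ℂ‖ = ‖(2:ℂ) * (⟪u, e⟫_ℂ * ⟪e, v⟫_ℂ)‖ := by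
          rw [norm_mul]; norm_num
      _ = ‖⟪w, v⟫_ℂ + ⟪u, v⟫_ℂ‖ := by rw [key]
      _ ≤ ‖⟪w, v⟫_ℂ‖ + ‖⟪u, v⟫_ℂ‖ := norm_add_le _ _
      _ ≤ ‖u‖ * ‖v‖ + ‖⟪u, v⟫_ℂ‖ := by linarith
  linarith

set_option maxHeartbeats 1000000 in
theorem stmt15 (k : Ω → H) (hk : ∀ lam, ‖k lam‖ = 1) (A : H →L[ℂ] H)
    (α : ℝ) (hα : α ∈ Set.Icc (0 : ℝ) 1) :
    (eta k A) ^ 2 ≤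
      (α / 2) * ber k (A ^ 2) +
        bernorm k (((1 - 3 * α / 4 : ℝ) : ℂ) • (absop A) ^ 2 +
          ((α / 4 : ℝ) : ℂ) • (absop (adjoint A)) ^ 2 + (absop A) ^ 4) := by
  obtain ⟨hα0, hα1⟩ := hα
  set T : H →L[ℂ] H := ((1 - 3 * α / 4 : ℝ) : ℂ) • (absop A) ^ 2 +
      ((α / 4 : ℝ) : ℂ) • (absop (adjoint A)) ^ 2 + (absop A) ^ 4 with hT
  set S : ℝ := (α / 2) * ber k (A ^ 2) + bernorm k T with hSdef
  -- operator identities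
  have hA2 : absop A ^ 2 = adjoint A * A :=
    CFC.sq_sqrt _ (by rw [← star_eq_adjoint]; exact star_mul_self_nonneg A)
  have hA2' : absop (adjoint A) ^ 2 = A * adjoint A := by
    unfold absop
    rw [adjoint_adjoint]
    refine CFC.sq_sqrt _ ?_
    nth_rewrite 1 [← adjoint_adjoint A]
    rw [← star_eq_adjoint]
    exact star_mul_self_nonneg _
  have hA4 : absop A ^ 4 = (adjoint A * A) * (adjoint A * A) := by
    rw [show (4:ℕ) = 2*2 from rfl, pow_mul, hA2, sq]
  -- boundedness
  have hbdd1 : BddAbove (Set.range fun lam : Ω => ‖⟪(A ^ 2) (k lam), k lam⟫_ℂ‖) := by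
    refine ⟨‖(A ^ 2 : H →L[ℂ] H)‖, ?_⟩
    rintro _ ⟨lam, rfl⟩
    calc ‖⟪(A ^ 2) (k lam), k lam⟫_ℂ‖ ≤ ‖(A ^ 2) (k lam)‖ * ‖k lam‖ := norm_inner_le_norm _ _
      _ = ‖(A ^ 2) (k lam)‖ := by rw [hk lam, mul_one]
      _ ≤ ‖(A ^ 2 : H →L[ℂ] H)‖ := by
          have := (A ^ 2 : H →L[ℂ] H).le_opNorm (k lam); rw [hk lam, mul_one] at this; exact this
  have hbdd2 : BddAbove (Set.range fun p : Ω × Ω => ‖⟪T (k p.1), k p.2⟫_ℂ‖) := by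
    refine ⟨‖T‖, ?_⟩
    rintro _ ⟨p, rfl⟩
    calc ‖⟪T (k p.1), k p.2⟫_ℂ‖ ≤ ‖T (k p.1)‖ * ‖k p.2‖ := norm_inner_le_norm _ _
      _ = ‖T (k p.1)‖ := by rw [hk p.2, mul_one]
      _ ≤ ‖T‖ := by simpa [hk p.1] using T.le_opNorm (k p.1)
  -- pointwise bound
  have hmain : ∀ lam : Ω, ‖⟪A (k lam), k lam⟫_ℂ‖ ^ 2 + ‖A (k lam)‖ ^ 4 ≤ S := by
    intro lam
    set x : H := k lam with hx
    have hx1 : ‖x‖ = 1 := hk lam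
    set a : ℝ := ‖A x‖ with ha
    set b : ℝ := ‖adjoint A x‖ with hb
    set q : ℝ := ‖(adjoint A * A) x‖ with hq
    set p : ℝ := ‖⟪(A ^ 2) x, x⟫_ℂ‖ with hp
    set m : ℝ := ‖⟪A x, x⟫_ℂ‖ with hm
    -- Buzano step
    have hswap : ⟪x, adjoint A x⟫_ℂ = ⟪A x, x⟫_ℂ := adjoint_inner_right A x x
    have hAA : ⟪A x, adjoint A x⟫_ℂ = ⟪(A ^ 2) x, x⟫_ℂ := by
      rw [adjoint_inner_right, pow_two, mul_apply_eq_comp]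
    have h1 : m ^ 2 ≤ (a * b + p) / 2 := by
      have := buzano_aux x (A x) (adjoint A x) hx1
      rw [hswap, hAA] at this
      calc m ^ 2 = ‖⟪A x, x⟫_ℂ * ⟪A x, x⟫_ℂ‖ := by rw [norm_mul, sq]
        _ ≤ (a * b + p) / 2 := this
    -- Cauchy-Schwarz step
    have h2 : m ^ 2 ≤ a ^ 2 := by
      have : m ≤ a := by
        simpa [hx1] using norm_inner_le_norm (A x) x
      exact pow_le_pow_left₀ (norm_nonneg _) this 2
    -- quartic step
    have e1 : ⟪(adjoint A * A) x, x⟫_ℂ = ((a : ℝ) : ℂ) ^ 2 := by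
      rw [mul_apply_eq_comp, adjoint_inner_left, inner_self_eq_norm_sq_to_K, ha]; norm_cast
    have h3 : a ^ 2 ≤ q := by
      have : ‖⟪(adjoint A * A) x, x⟫_ℂ‖ = a ^ 2 := by
        rw [e1]; simp [sq_abs]
      calc a ^ 2 = ‖⟪(adjoint A * A) x, x⟫_ℂ‖ := this.symm
        _ ≤ ‖(adjoint A * A) x‖ * ‖x‖ := norm_inner_le_norm _ _
        _ = q := by rw [hx1, mul_one]
    have h4 : a ^ 4 ≤ q ^ 2 := by
      calc a ^ 4 = (a ^ 2) ^ 2 := by ring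
        _ ≤ q ^ 2 := pow_le_pow_left₀ (sq_nonneg a) h3 2
    -- inner product with T
    have e2 : ⟪(A * adjoint A) x, x⟫_ℂ = ((b : ℝ) : ℂ) ^ 2 := by
      rw [mul_apply_eq_comp]
      nth_rewrite 1 [← adjoint_adjoint A]
      rw [adjoint_inner_left, inner_self_eq_norm_sq_to_K, hb]; norm_cast
    have e3 : ⟪(absop A ^ 4) x, x⟫_ℂ = ((q : ℝ) : ℂ) ^ 2 := by
      rw [hA4]
      simp only [mul_apply_eq_comp]
      rw [adjoint_inner_left, ← adjoint_inner_right A, ← mul_apply_eq_comp (adjoint A) A,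
        inner_self_eq_norm_sq_to_K, hq]
      norm_cast
    set r : ℝ := (1 - 3 * α / 4) * a ^ 2 + (α / 4) * b ^ 2 + q ^ 2 with hr
    have hTval : ⟪T x, x⟫_ℂ = ((r : ℝ) : ℂ) := by
      rw [hT]
      simp only [add_apply, smul_apply, inner_add_left, inner_smul_left, hA2, hA2',
        Complex.conj_ofReal, e1, e2, e3]
      norm_cast
    have hrle : r ≤ bernorm k T := by
      have hrnorm : r ≤ ‖⟪T x, x⟫_ℂ‖ := by
        rw [hTval, Complex.norm_real]
        exact le_abs_self r
      calc r ≤ ‖⟪T (k (lam, lam).1), k (lam, lam).2⟫_ℂ‖ := hrnorm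
        _ ≤ bernorm k T := le_ciSup hbdd2 (lam, lam)
    have hple : p ≤ ber k (A ^ 2) := le_ciSup hbdd1 lam
    have hcomb : m ^ 2 + a ^ 4 ≤ α / 2 * p + r := by
      nlinarith [mul_le_mul_of_nonneg_left h1 hα0,
        mul_le_mul_of_nonneg_left h2 (by linarith : (0:ℝ) ≤ 1 - α),
        sq_nonneg (a - b), h4, hα0]
    calc ‖⟪A x, x⟫_ℂ‖ ^ 2 + ‖A x‖ ^ 4 = m ^ 2 + a ^ 4 := rfl
      _ ≤ α / 2 * p + r := hcomb
      _ ≤ α / 2 * ber k (A ^ 2) + bernorm k T := by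
          gcongr
      _ = S := rfl
  have hSnn : 0 ≤ S := le_trans (by positivity) (hmain (Classical.arbitrary Ω))
  have heta : eta k A ≤ Real.sqrt S :=
    ciSup_le fun lam => Real.sqrt_le_sqrt (hmain lam)
  have hnn : 0 ≤ eta k A := Real.iSup_nonneg fun lam => Real.sqrt_nonneg _
  calc eta k A ^ 2 ≤ Real.sqrt S ^ 2 := pow_le_pow_left₀ hnn heta 2
    _ = S := Real.sq_sqrt hSnn
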